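/- Let A_f be an m×n real matrix, Q an m×r matrix with orthonormal columns, and let Â_f be a best rank-k approximation (in spectral norm) of QQᵀA_f. Then ‖A_f − Â_f‖₂ ≤ ‖(I − QQᵀ)A_f‖₂ + σ_{k+1}(A_f), where σ_{k+1}(A_f) is the (k+1)-th largest singular value of A_f. -/

import Mathlib

open Matrix
open scoped Matrix.Norms.L2Operator

lemma aux_norm_Q_le_one {m r : ℕ} (Q : Matrix (Fin m) (Fin r) ℝ) (hQ : Qᵀ * Q = 1) :
    ‖Q‖ ≤ 1 := by
  have hQH : Qᴴ = Qᵀ := by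
    ext i j; simp [Matrix.conjTranspose_apply]
  have h : ‖Q‖ * ‖Q‖ ≤ 1 := by
    rw [← Matrix.l2_opNorm_conjTranspose_mul_self Q, hQH, hQ, Matrix.cstar_norm_def, _root_.map_one]
    rw [ContinuousLinearMap.one_def]
    exact ContinuousLinearMap.norm_id_le
  nlinarith [norm_nonneg Q]

/-- If `Â` is a best rank-`k` (spectral norm) approximation of `QQᵀA_f` where `Q` has
orthonormal columns, then `‖A_f - Â‖₂ ≤ ‖(I - QQᵀ)A_f‖₂ + σ_{k+1}(A_f)`, where
`σ_{k+1}(A_f)` is the spectral-norm distance of `A_f` to the rank-`k` matrices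
(Eckart–Young). -/
theorem stmt2 {m n r k : ℕ}
    (A_f : Matrix (Fin m) (Fin n) ℝ) (Q : Matrix (Fin m) (Fin r) ℝ)
    (hQ : Qᵀ * Q = 1)
    (Ahat : Matrix (Fin m) (Fin n) ℝ)
    (hrank : Ahat.rank ≤ k)
    (hbest : ∀ X : Matrix (Fin m) (Fin n) ℝ, X.rank ≤ k →
      ‖Q * Qᵀ * A_f - Ahat‖ ≤ ‖Q * Qᵀ * A_f - X‖)
    (σ : ℝ)
    (hσ : σ = sInf {c : ℝ | ∃ X : Matrix (Fin m) (Fin n) ℝ, X.rank ≤ k ∧ ‖A_f - X‖ = c}) :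
    ‖A_f - Ahat‖ ≤ ‖A_f - Q * Qᵀ * A_f‖ + σ := by
  have hQn : ‖Q‖ ≤ 1 := aux_norm_Q_le_one Q hQ
  have hQTn : ‖Qᵀ‖ ≤ 1 := by
    have hQH : Qᴴ = Qᵀ := by ext i j; simp [Matrix.conjTranspose_apply]
    rw [← hQH, Matrix.l2_opNorm_conjTranspose]; exact hQn
  have key : ∀ X : Matrix (Fin m) (Fin n) ℝ, X.rank ≤ k →
      ‖Q * Qᵀ * A_f - Ahat‖ ≤ ‖A_f - X‖ := by
    intro X hX
    have hrk : (Q * Qᵀ * X).rank ≤ k :=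
      le_trans (Matrix.rank_mul_le_right _ _) hX
    calc ‖Q * Qᵀ * A_f - Ahat‖ ≤ ‖Q * Qᵀ * A_f - Q * Qᵀ * X‖ := hbest _ hrk
      _ = ‖Q * (Qᵀ * (A_f - X))‖ := by
          rw [Matrix.mul_assoc, Matrix.mul_assoc, ← Matrix.mul_sub, ← Matrix.mul_sub]
      _ ≤ ‖Q‖ * ‖Qᵀ * (A_f - X)‖ := Matrix.l2_opNorm_mul _ _
      _ ≤ 1 * (‖Qᵀ‖ * ‖A_f - X‖) :=
          mul_le_mul hQn (Matrix.l2_opNorm_mul _ _) (norm_nonneg _) zero_le_one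
      _ ≤ 1 * (1 * ‖A_f - X‖) := by
          have := mul_le_mul_of_nonneg_right hQTn (norm_nonneg (A_f - X))
          linarith
      _ = ‖A_f - X‖ := by ring
  have hσ_ge : ‖Q * Qᵀ * A_f - Ahat‖ ≤ σ := by
    rw [hσ]
    apply le_csInf
    · exact ⟨‖A_f - 0‖, 0, by simp, rfl⟩
    · rintro c ⟨X, hX, rfl⟩
      exact key X hX
  calc ‖A_f - Ahat‖ = ‖(A_f - Q * Qᵀ * A_f) + (Q * Qᵀ * A_f - Ahat)‖ := by
        rw [sub_add_sub_cancel]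
    _ ≤ ‖A_f - Q * Qᵀ * A_f‖ + ‖Q * Qᵀ * A_f - Ahat‖ := norm_add_le _ _
    _ ≤ ‖A_f - Q * Qᵀ * A_f‖ + σ := by linarith
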